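/- Let Σ, Λ ∈ Sym⁺(n,k) (PSD of rank k) with rank(ΣΛ) = k. Then XRY^T = Σ^{1/2}((Σ^{1/2}ΛΣ^{1/2})^{1/2})^− Σ^{1/2}Λ, where X = UD^{1/2}, Σ = UDU^T with U ∈ St(n,k), D diagonal positive, Y any full-rank factor of Λ (YY^T = Λ), H = (X^TΛX)^{1/2}, and R = H^{−1}X^TY; here M^− denotes the Moore-Penrose pseudoinverse. -/

import Mathlib

open Matrix

open Classical in
/-- The symmetric PSD square root of a PSD matrix (junk value `0` otherwise). -/
noncomputable def psdSqrt {n : ℕ} (A : Matrix (Fin n) (Fin n) ℝ) : Matrix (Fin n) (Fin n) ℝ :=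
  if h : A.PosSemidef then
    (h.1.eigenvectorUnitary : Matrix (Fin n) (Fin n) ℝ) *
      Matrix.diagonal ((RCLike.ofReal : ℝ → ℝ) ∘ Real.sqrt ∘ h.1.eigenvalues) *
      (star h.1.eigenvectorUnitary : Matrix (Fin n) (Fin n) ℝ)
  else 0

/-- The four Moore-Penrose conditions: `B` is the Moore-Penrose pseudoinverse of `A`. -/
def IsMoorePenrose {m k : ℕ} (A : Matrix (Fin m) (Fin k) ℝ) (B : Matrix (Fin k) (Fin m) ℝ) :
    Prop :=
  A * B * A = A ∧ B * A * B = B ∧ (A * B)ᵀ = A * B ∧ (B * A)ᵀ = B * A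

open scoped MatrixOrder in
lemma psdSqrt_eq_cfc {n : ℕ} {A : Matrix (Fin n) (Fin n) ℝ} (hA : A.PosSemidef) :
    psdSqrt A = CFC.sqrt A := by
  rw [CFC.sqrt_eq_cfc, cfc_nnreal_eq_real _ A, hA.1.cfc_eq, psdSqrt, dif_pos hA]
  simp only [IsHermitian.cfc, Unitary.conjStarAlgAut_apply, Real.coe_sqrt, Real.coe_toNNReal']
  congr 3
  funext i
  simp [max_eq_left (hA.eigenvalues_nonneg i)]

open scoped MatrixOrder in
lemma psdSqrt_eq {n : ℕ} {A S : Matrix (Fin n) (Fin n) ℝ} (hA : A.PosSemidef)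
    (hS : S.PosSemidef) (h : S ^ 2 = A) : psdSqrt A = S := by
  rw [psdSqrt_eq_cfc hA, CFC.sqrt_eq_iff A S hA.nonneg hS.nonneg, ← h, sq]

open scoped MatrixOrder in
lemma psdSqrt_posSemidef {n : ℕ} {A : Matrix (Fin n) (Fin n) ℝ} (hA : A.PosSemidef) :
    (psdSqrt A).PosSemidef := by
  rw [psdSqrt_eq_cfc hA]; exact (CFC.sqrt_nonneg A).posSemidef

open scoped MatrixOrder in
lemma psdSqrt_sq {n : ℕ} {A : Matrix (Fin n) (Fin n) ℝ} (hA : A.PosSemidef) :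
    psdSqrt A ^ 2 = A := by
  rw [psdSqrt_eq_cfc hA]; exact CFC.sq_sqrt A hA.nonneg

lemma rank_full_isUnit {k : ℕ} {N : Matrix (Fin k) (Fin k) ℝ} (h : N.rank = k) : IsUnit N := by
  rw [← Matrix.mulVec_surjective_iff_isUnit]
  have ht : LinearMap.range N.mulVecLin = ⊤ := by
    apply Submodule.eq_top_of_finrank_eq
    rw [← Matrix.rank, h]
    simp
  have hs := LinearMap.range_eq_top.mp ht
  intro v
  obtain ⟨w, hw⟩ := hs v
  exact ⟨w, hw⟩

lemma isMoorePenrose_unique {m k : ℕ} (A : Matrix (Fin m) (Fin k) ℝ)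
    (B C : Matrix (Fin k) (Fin m) ℝ) (hB : IsMoorePenrose A B) (hC : IsMoorePenrose A C) :
    B = C := by
  obtain ⟨hB1, hB2, hB3, hB4⟩ := hB
  obtain ⟨hC1, hC2, hC3, hC4⟩ := hC
  have hAB : A * B = A * C := by
    calc A * B = (A * C) * (A * B) := by
          conv_lhs => rw [← hC1]
          simp [Matrix.mul_assoc]
      _ = ((A * B) * (A * C))ᵀ := by rw [transpose_mul, hC3, hB3]
      _ = (A * C)ᵀ := by rw [Matrix.mul_assoc, ← Matrix.mul_assoc B A C, ← Matrix.mul_assoc A (B*A) C, ← Matrix.mul_assoc A B A, hB1]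
      _ = A * C := hC3
  have hBA : B * A = C * A := by
    calc B * A = (B * A) * (C * A) := by
          conv_lhs => rw [← hC1]
          simp [Matrix.mul_assoc]
      _ = ((C * A) * (B * A))ᵀ := by rw [transpose_mul, hC4, hB4]
      _ = (C * A)ᵀ := by rw [Matrix.mul_assoc, ← Matrix.mul_assoc A B A, hB1]
      _ = C * A := hC4
  calc B = B * A * B := hB2.symm
    _ = B * (A * C) := by rw [Matrix.mul_assoc, hAB]
    _ = C * A * C := by rw [← Matrix.mul_assoc, hBA]
    _ = C := hC2

lemma sandwich_mul {n k : ℕ} {U : Matrix (Fin n) (Fin k) ℝ} (hU : Uᵀ * U = 1)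
    (M N : Matrix (Fin k) (Fin k) ℝ) :
    (U * M * Uᵀ) * (U * N * Uᵀ) = U * (M * N) * Uᵀ := by
  simp only [Matrix.mul_assoc]
  rw [← Matrix.mul_assoc Uᵀ U, hU, Matrix.one_mul]

theorem unique_log_geodesic_formula (n k : ℕ) (A B : Matrix (Fin n) (Fin n) ℝ)
    (hA : A.PosSemidef) (hB : B.PosSemidef)
    (hAk : A.rank = k) (hBk : B.rank = k) (hABk : (A * B).rank = k)
    (U : Matrix (Fin n) (Fin k) ℝ) (hU : Uᵀ * U = 1)
    (d : Fin k → ℝ) (hd : ∀ i, 0 < d i)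
    (hdec : A = U * Matrix.diagonal d * Uᵀ)
    (Y : Matrix (Fin n) (Fin k) ℝ) (hY : Y * Yᵀ = B) (hYrank : Y.rank = k)
    (X : Matrix (Fin n) (Fin k) ℝ) (hXdef : X = U * psdSqrt (Matrix.diagonal d))
    (P : Matrix (Fin n) (Fin n) ℝ)
    (hP : IsMoorePenrose (psdSqrt (psdSqrt A * B * psdSqrt A)) P) :
    X * ((psdSqrt (Xᵀ * B * X))⁻¹ * (Xᵀ * Y)) * Yᵀ
      = psdSqrt A * P * psdSqrt A * B := by
  set E : Matrix (Fin k) (Fin k) ℝ := Matrix.diagonal (fun i => Real.sqrt (d i)) with hEdef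
  have hEpsd : E.PosSemidef := posSemidef_diagonal_iff.mpr fun i => Real.sqrt_nonneg _
  have hEE : E * E = Matrix.diagonal d := by
    rw [hEdef, diagonal_mul_diagonal]
    exact congrArg Matrix.diagonal (funext fun i => Real.mul_self_sqrt (hd i).le)
  have hEsq : E ^ 2 = Matrix.diagonal d := by rw [sq, hEE]
  have hDpsd : (Matrix.diagonal d).PosSemidef :=
    posSemidef_diagonal_iff.mpr fun i => (hd i).le
  have hE : psdSqrt (Matrix.diagonal d) = E := psdSqrt_eq hDpsd hEpsd hEsq
  have hX : X = U * E := by rw [hXdef, hE]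
  have hEt : Eᵀ = E := by rw [hEdef, diagonal_transpose]
  have hXt : Xᵀ = E * Uᵀ := by
    rw [hX, transpose_mul, hEt]
  have hXX : X * Xᵀ = A := by
    rw [hX, transpose_mul, hEt, hdec, ← hEE]
    simp only [Matrix.mul_assoc]
  have hUEU_psd : (U * E * Uᵀ).PosSemidef := by
    have := hEpsd.mul_mul_conjTranspose_same U
    rwa [conjTranspose_eq_transpose_of_trivial] at this
  have hsqA : psdSqrt A = U * E * Uᵀ := by
    refine psdSqrt_eq hA hUEU_psd ?_
    rw [sq, sandwich_mul hU, hEE, ← hdec]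
  -- rank of Xᵀ * Y
  have hABfac : A * B = X * ((Xᵀ * Y) * Yᵀ) := by
    rw [← hXX, ← hY]
    simp only [Matrix.mul_assoc]
  have hNrank : (Xᵀ * Y).rank = k := by
    refine le_antisymm (Matrix.rank_le_width _) ?_
    calc k = (A * B).rank := hABk.symm
      _ ≤ ((Xᵀ * Y) * Yᵀ).rank := by rw [hABfac]; exact Matrix.rank_mul_le_right _ _
      _ ≤ (Xᵀ * Y).rank := Matrix.rank_mul_le_left _ _
  have hNdet : IsUnit (Xᵀ * Y).det :=
    (Matrix.isUnit_iff_isUnit_det _).mp (rank_full_isUnit hNrank)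
  have hMN : Xᵀ * B * X = (Xᵀ * Y) * (Xᵀ * Y)ᵀ := by
    rw [← hY, transpose_mul, transpose_transpose]
    simp only [Matrix.mul_assoc]
  have hMpsd : (Xᵀ * B * X).PosSemidef := by
    have := hB.conjTranspose_mul_mul_same X
    rwa [conjTranspose_eq_transpose_of_trivial] at this
  have hMdet : IsUnit (Xᵀ * B * X).det := by
    rw [hMN, det_mul, det_transpose]
    exact hNdet.mul hNdet
  set H : Matrix (Fin k) (Fin k) ℝ := psdSqrt (Xᵀ * B * X) with hHdef
  have hHpsd : H.PosSemidef := psdSqrt_posSemidef hMpsd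
  have hHsq : H ^ 2 = Xᵀ * B * X := psdSqrt_sq hMpsd
  have hHdet : IsUnit H.det := by
    have h2 : IsUnit (H.det ^ 2) := by rw [← det_pow, hHsq]; exact hMdet
    rw [isUnit_iff_ne_zero] at h2 ⊢
    exact pow_ne_zero_iff two_ne_zero |>.mp h2
  have hHinv1 : H * H⁻¹ = 1 := Matrix.mul_nonsing_inv _ hHdet
  have hHinv2 : H⁻¹ * H = 1 := Matrix.nonsing_inv_mul _ hHdet
  -- identify psdSqrt (√A B √A)
  have hSBS : psdSqrt A * B * psdSqrt A = U * (Xᵀ * B * X) * Uᵀ := by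
    rw [hsqA, hXt, hX]
    simp only [Matrix.mul_assoc]
  have hSBSpsd : (psdSqrt A * B * psdSqrt A).PosSemidef := by
    rw [hSBS]
    have := hMpsd.mul_mul_conjTranspose_same U
    rwa [conjTranspose_eq_transpose_of_trivial] at this
  have hUHU_psd : (U * H * Uᵀ).PosSemidef := by
    have := hHpsd.mul_mul_conjTranspose_same U
    rwa [conjTranspose_eq_transpose_of_trivial] at this
  have hSeq : psdSqrt (psdSqrt A * B * psdSqrt A) = U * H * Uᵀ := by
    refine psdSqrt_eq hSBSpsd hUHU_psd ?_
    rw [sq, sandwich_mul hU, ← sq, hHsq, hSBS]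
  have hQ : IsMoorePenrose (U * H * Uᵀ) (U * H⁻¹ * Uᵀ) := by
    refine ⟨?_, ?_, ?_, ?_⟩
    · rw [sandwich_mul hU, sandwich_mul hU, hHinv1, Matrix.one_mul]
    · rw [sandwich_mul hU, sandwich_mul hU, hHinv2, Matrix.one_mul]
    · rw [sandwich_mul hU, hHinv1]
      simp [transpose_mul, Matrix.mul_one]
    · rw [sandwich_mul hU, hHinv2]
      simp [transpose_mul, Matrix.mul_one]
  have hPQ : P = U * H⁻¹ * Uᵀ := by
    refine isMoorePenrose_unique (U * H * Uᵀ) P _ ?_ hQ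
    rwa [hSeq] at hP
  rw [hPQ, hsqA, ← hY, hXt, hX, sandwich_mul hU, sandwich_mul hU]
  simp only [Matrix.mul_assoc]
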